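/- Every m-tensor word w over [k] satisfies cycdes(w) ≤ ∑_{i∈[d]} (∏_{ℓ∈[d], ℓ≠i} m_ℓ)·⌊m_i(k−1)/k⌋. -/

import Mathlib

/-- The number of descents of an `m`-tensor word `w` over `[k]`. -/
def tensorDes {k d : ℕ} {m : Fin d → ℕ} (w : (∀ ℓ, Fin (m ℓ)) → Fin k) : ℕ :=
  (Finset.univ.filter fun p : (∀ ℓ, Fin (m ℓ)) × (∀ ℓ, Fin (m ℓ)) =>
      w p.2 < w p.1 ∧
        ∃ ℓ, ((p.2 ℓ : ℕ) = (p.1 ℓ : ℕ) + 1 ∧ ∀ r, r ≠ ℓ → p.2 r = p.1 r)).card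

/-- The number of descents and cyclic descents of a cyclic `m`-tensor word `w` over `[k]`. -/
def tensorCycDes {k d : ℕ} {m : Fin d → ℕ} (w : (∀ ℓ, Fin (m ℓ)) → Fin k) : ℕ :=
  tensorDes w +
    (Finset.univ.filter fun p : (∀ ℓ, Fin (m ℓ)) × (∀ ℓ, Fin (m ℓ)) =>
        w p.2 < w p.1 ∧
          ∃ ℓ, (((p.1 ℓ : ℕ) + 1 = m ℓ ∧ (p.2 ℓ : ℕ) = 0 ∧ ∀ r, r ≠ ℓ → p.2 r = p.1 r) ∧
            ∀ ℓ', ((p.1 ℓ' : ℕ) + 1 = m ℓ' ∧ (p.2 ℓ' : ℕ) = 0 ∧ ∀ r, r ≠ ℓ' → p.2 r = p.1 r) →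
              ℓ' = ℓ)).card

open Finset

lemma fin_val_add_one' {n : ℕ} [NeZero n] (a : Fin n) : ((a + 1 : Fin n) : ℕ) = (a + 1) % n := by
  rw [Fin.add_def, Fin.val_one']
  simp [Nat.add_mod]

lemma oneD_bound {n k : ℕ} [NeZero n] (hk : 1 ≤ k) (f : Fin n → Fin k) :
    (univ.filter fun t : Fin n => f (t + 1) < f t).card ≤ n * (k - 1) / k := by
  set D := univ.filter fun t : Fin n => f (t + 1) < f t with hD
  set A := univ.filter fun t : Fin n => f t < f (t + 1) with hA
  have hre : ∑ t : Fin n, ((f (t+1) : ℕ) : ℤ) = ∑ t : Fin n, ((f t : ℕ) : ℤ) :=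
    Fintype.sum_equiv (Equiv.addRight (1 : Fin n)) _ _ (fun t => rfl)
  have hsum : ∑ t : Fin n, ((f (t + 1) : ℤ) - (f t : ℤ)) = 0 := by
    rw [Finset.sum_sub_distrib, hre, sub_self]
  have hsplit : ∑ t ∈ D, ((f (t+1) : ℤ) - f t) + ∑ t ∈ Dᶜ, ((f (t+1) : ℤ) - f t) = 0 := by
    rw [Finset.sum_add_sum_compl]; exact hsum
  have h1 : (D.card : ℤ) ≤ ∑ t ∈ D, ((f t : ℤ) - f (t+1)) := by
    calc (D.card : ℤ) = ∑ t ∈ D, (1 : ℤ) := by simp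
      _ ≤ _ := by
        apply Finset.sum_le_sum
        intro t ht
        simp only [hD, Finset.mem_filter] at ht
        have := ht.2
        rw [Fin.lt_def] at this
        omega
  have h2 : ∑ t ∈ D, ((f t:ℤ) - f (t+1)) = ∑ t ∈ Dᶜ, ((f (t+1):ℤ) - f t) := by
    have hneg : ∑ t ∈ D, ((f t:ℤ) - f (t+1)) = -∑ t ∈ D, ((f (t+1):ℤ) - f t) := by
      rw [← Finset.sum_neg_distrib]
      exact Finset.sum_congr rfl fun t _ => by ring
    linarith [hsplit]
  have hAsub : A ⊆ Dᶜ := by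
    intro t ht
    simp only [hA, Finset.mem_filter] at ht
    simp only [hD, Finset.mem_compl, Finset.mem_filter]
    intro hc
    exact absurd ht.2 (not_lt.mpr (le_of_lt hc.2))
  have h3 : ∑ t ∈ Dᶜ, ((f (t+1):ℤ) - f t) ≤ (k - 1 : ℤ) * A.card := by
    have hsd : ∑ t ∈ Dᶜ \ A, ((f (t+1):ℤ) - f t) + ∑ t ∈ A, ((f (t+1):ℤ) - f t)
        = ∑ t ∈ Dᶜ, ((f (t+1):ℤ) - f t) := Finset.sum_sdiff hAsub
    have hz : ∑ t ∈ Dᶜ \ A, ((f (t+1):ℤ) - f t) = 0 := by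
      apply Finset.sum_eq_zero
      intro t ht
      rw [Finset.mem_sdiff] at ht
      have h1 := ht.1
      have h2 := ht.2
      simp only [hD, Finset.mem_compl, Finset.mem_filter, Finset.mem_univ, true_and, not_lt] at h1
      simp only [hA, Finset.mem_filter, Finset.mem_univ, true_and, not_lt] at h2
      have : f t = f (t+1) := le_antisymm h1 h2
      rw [this]; ring
    have hb : ∑ t ∈ A, ((f (t+1):ℤ) - f t) ≤ ∑ t ∈ A, (k - 1 : ℤ) := by
      apply Finset.sum_le_sum
      intro t _
      have h1 : (f (t+1) : ℕ) < k := (f (t+1)).isLt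
      have h2 : (0:ℕ) ≤ (f t : ℕ) := Nat.zero_le _
      omega
    rw [← hsd, hz, zero_add]
    calc ∑ t ∈ A, ((f (t+1):ℤ) - f t) ≤ ∑ t ∈ A, (k-1:ℤ) := hb
      _ = (k-1:ℤ) * A.card := by rw [Finset.sum_const]; push_cast; ring
  have hdisj : Disjoint D A := by
    rw [Finset.disjoint_left]
    intro t htD htA
    simp only [hD, Finset.mem_filter] at htD
    simp only [hA, Finset.mem_filter] at htA
    exact absurd htA.2 (not_lt.mpr (le_of_lt htD.2))
  have hcards : D.card + A.card ≤ n := by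
    have := Finset.card_union_of_disjoint hdisj
    have hle : (D ∪ A).card ≤ n := by
      simpa using Finset.card_le_card (Finset.subset_univ (D ∪ A))
    omega
  have hkey : (D.card : ℤ) * k ≤ (n : ℤ) * (k - 1) := by
    have hDA : (D.card : ℤ) ≤ (k - 1) * A.card := le_trans h1 (h2 ▸ h3)
    have hc : (D.card : ℤ) + A.card ≤ n := by exact_mod_cast hcards
    have hk' : (1:ℤ) ≤ k := by exact_mod_cast hk
    nlinarith
  have : D.card * k ≤ n * (k - 1) := by
    zify [hk]
    exact hkey
  exact (Nat.le_div_iff_mul_le (by omega)).mpr this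

lemma dir_bound {k d : ℕ} {m : Fin d → ℕ} [inst : ∀ ℓ, NeZero (m ℓ)] (hk : 1 ≤ k)
    (w : (∀ ℓ, Fin (m ℓ)) → Fin k) (i : Fin d) :
    (univ.filter fun x : ∀ ℓ, Fin (m ℓ) =>
        w (Function.update x i (x i + 1)) < w x).card
      ≤ (∏ ℓ ∈ univ.erase i, m ℓ) * (m i * (k - 1) / k) := by
  classical
  set e := Equiv.piSplitAt i (fun ℓ => Fin (m ℓ)) with he
  have hupd : ∀ (q : Fin (m i) × ∀ j : {j // j ≠ i}, Fin (m j)) (v : Fin (m i)),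
      Function.update (e.symm q) i v = e.symm (v, q.2) := by
    intro q v
    funext r
    by_cases h : r = i
    · subst h
      simp [he, Equiv.piSplitAt_symm_apply]
    · simp [he, Function.update_of_ne h, Equiv.piSplitAt_symm_apply, h]
  have hat : ∀ (q : Fin (m i) × ∀ j : {j // j ≠ i}, Fin (m j)), (e.symm q) i = q.1 := by
    intro q; simp [he, Equiv.piSplitAt_symm_apply]
  have hcard : (univ.filter fun x : ∀ ℓ, Fin (m ℓ) =>
        w (Function.update x i (x i + 1)) < w x).card
      = ((univ : Finset (Fin (m i) × ∀ j : {j // j ≠ i}, Fin (m j))).filter fun q =>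
          w (e.symm (q.1 + 1, q.2)) < w (e.symm q)).card := by
    apply Finset.card_nbij' (fun x => e x) (fun q => e.symm q)
    · intro x hx
      rw [Finset.mem_coe, Finset.mem_filter] at hx ⊢
      refine ⟨Finset.mem_univ _, ?_⟩
      have h1 : e.symm (e x) = x := e.symm_apply_apply x
      have h2 : (e x).1 = x i := rfl
      rw [show ((e x).1 + 1, (e x).2) = ((e.symm (e x)) i + 1, (e x).2) by rw [h1]; rfl]
      rw [← hupd (e x) ((e.symm (e x)) i + 1), h1]
      exact hx.2
    · intro q hq
      rw [Finset.mem_coe, Finset.mem_filter] at hq ⊢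
      refine ⟨Finset.mem_univ _, ?_⟩
      beta_reduce
      rw [hupd q, hat q]
      exact hq.2
    · intro x _; exact e.symm_apply_apply x
    · intro q _; exact e.apply_symm_apply q
  rw [hcard]
  rw [Finset.card_eq_sum_card_fiberwise (f := Prod.snd)
    (t := (univ : Finset (∀ j : {j // j ≠ i}, Fin (m j)))) (fun x _ => Finset.mem_univ _)]
  have hfib : ∀ g, ((Finset.filter (fun q : Fin (m i) × ∀ j : {j // j ≠ i}, Fin (m j) =>
        w (e.symm (q.1 + 1, q.2)) < w (e.symm q)) univ).filter fun q => q.2 = g).card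
      ≤ m i * (k - 1) / k := by
    intro g
    have hb := oneD_bound (n := m i) hk (fun t => w (e.symm (t, g)))
    have heq : ((Finset.filter (fun q : Fin (m i) × ∀ j : {j // j ≠ i}, Fin (m j) =>
        w (e.symm (q.1 + 1, q.2)) < w (e.symm q)) univ).filter fun q => q.2 = g).card
        = (univ.filter fun t : Fin (m i) => w (e.symm (t + 1, g)) < w (e.symm (t, g))).card := by
      apply Finset.card_nbij' (fun q => q.1) (fun t => (t, g))
      · intro q hq
        simp only [Finset.mem_coe, Finset.mem_filter, Finset.mem_univ, true_and] at hq ⊢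
        obtain ⟨h1, h2⟩ := hq
        rw [← h2]
        exact h1
      · intro t ht
        simp only [Finset.mem_coe, Finset.mem_filter, Finset.mem_univ, true_and] at ht ⊢
        constructor
        · exact ht
        · trivial
      · intro q hq
        simp only [Finset.mem_coe, Finset.mem_filter] at hq
        simp only [Finset.mem_filter, Finset.mem_univ, true_and] at hq
        exact Prod.ext rfl hq.2.symm
      · intro t _; rfl
    rw [heq]; exact hb
  calc ∑ g : (∀ j : {j // j ≠ i}, Fin (m j)), _ ≤ ∑ _g : (∀ j : {j // j ≠ i}, Fin (m j)), (m i * (k-1)/k) :=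
        Finset.sum_le_sum fun g _ => hfib g
    _ = Fintype.card (∀ j : {j // j ≠ i}, Fin (m j)) * (m i * (k-1)/k) := by
        rw [Finset.sum_const, Finset.card_univ, smul_eq_mul]
    _ = (∏ ℓ ∈ univ.erase i, m ℓ) * (m i * (k-1)/k) := by
        congr 1
        rw [Fintype.card_pi]
        simp only [Fintype.card_fin]
        exact (Finset.prod_subtype (univ.erase i) (fun x => by simp) (fun ℓ => m ℓ)).symm

/-- Every `m`-tensor word `w` over `[k]` satisfies
`cycdes w ≤ ∑ i, (∏_{ℓ ≠ i} m ℓ) · ⌊m i (k−1)/k⌋`. -/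
theorem cyclic_descents_upper_bound (k d : ℕ) (hk : 1 ≤ k) (hd : 1 ≤ d)
    (m : Fin d → ℕ) (hm : ∀ ℓ, 1 ≤ m ℓ) (w : (∀ ℓ, Fin (m ℓ)) → Fin k) :
    tensorCycDes w ≤
      ∑ i, (∏ ℓ ∈ Finset.univ.erase i, m ℓ) * (m i * (k - 1) / k) := by
  classical
  haveI : ∀ ℓ, NeZero (m ℓ) := fun ℓ => ⟨Nat.one_le_iff_ne_zero.mp (hm ℓ)⟩
  set A := (Finset.univ.filter fun p : (∀ ℓ, Fin (m ℓ)) × (∀ ℓ, Fin (m ℓ)) =>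
      w p.2 < w p.1 ∧
        ∃ ℓ, ((p.2 ℓ : ℕ) = (p.1 ℓ : ℕ) + 1 ∧ ∀ r, r ≠ ℓ → p.2 r = p.1 r)) with hA
  set B := (Finset.univ.filter fun p : (∀ ℓ, Fin (m ℓ)) × (∀ ℓ, Fin (m ℓ)) =>
        w p.2 < w p.1 ∧
          ∃ ℓ, (((p.1 ℓ : ℕ) + 1 = m ℓ ∧ (p.2 ℓ : ℕ) = 0 ∧ ∀ r, r ≠ ℓ → p.2 r = p.1 r) ∧
            ∀ ℓ', ((p.1 ℓ' : ℕ) + 1 = m ℓ' ∧ (p.2 ℓ' : ℕ) = 0 ∧ ∀ r, r ≠ ℓ' → p.2 r = p.1 r) →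
              ℓ' = ℓ)) with hB
  have hval : tensorCycDes w = A.card + B.card := rfl
  set S : Fin d → Finset ((∀ ℓ, Fin (m ℓ)) × (∀ ℓ, Fin (m ℓ))) := fun i =>
    univ.filter fun p => w p.2 < w p.1 ∧ p.2 = Function.update p.1 i (p.1 i + 1) with hS
  have hdisj : Disjoint A B := by
    rw [Finset.disjoint_left]
    intro p hpA hpB
    rw [hA, Finset.mem_filter] at hpA
    rw [hB, Finset.mem_filter] at hpB
    obtain ⟨_, _, ℓ, h1, h2⟩ := hpA
    obtain ⟨_, _, ℓ', ⟨hm1, h0, h2'⟩, _⟩ := hpB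
    by_cases hll : ℓ = ℓ'
    · subst hll
      omega
    · have := congrArg Fin.val (h2' ℓ hll)
      omega
  have hsub : A ∪ B ⊆ univ.biUnion S := by
    intro p hp
    rw [Finset.mem_biUnion]
    rw [Finset.mem_union] at hp
    rcases hp with hp | hp
    · rw [hA, Finset.mem_filter] at hp
      obtain ⟨_, hw, ℓ, h1, h2⟩ := hp
      refine ⟨ℓ, Finset.mem_univ _, ?_⟩
      rw [hS, Finset.mem_filter]
      refine ⟨Finset.mem_univ _, hw, ?_⟩
      funext r
      by_cases hr : r = ℓ
      · subst hr
        rw [Function.update_self]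
        apply Fin.ext
        rw [fin_val_add_one' (p.1 r)]
        have hlt : (p.2 r : ℕ) < m r := (p.2 r).isLt
        rw [Nat.mod_eq_of_lt (by omega)]
        omega
      · rw [Function.update_of_ne hr]
        exact h2 r hr
    · rw [hB, Finset.mem_filter] at hp
      obtain ⟨_, hw, ℓ, ⟨hm1, h0, h2⟩, _⟩ := hp
      refine ⟨ℓ, Finset.mem_univ _, ?_⟩
      rw [hS, Finset.mem_filter]
      refine ⟨Finset.mem_univ _, hw, ?_⟩
      funext r
      by_cases hr : r = ℓ
      · subst hr
        rw [Function.update_self]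
        apply Fin.ext
        rw [fin_val_add_one' (p.1 r), hm1, Nat.mod_self]
        omega
      · rw [Function.update_of_ne hr]
        exact h2 r hr
  have hScard : ∀ i, (S i).card ≤ (univ.filter fun x : ∀ ℓ, Fin (m ℓ) =>
      w (Function.update x i (x i + 1)) < w x).card := by
    intro i
    apply Finset.card_le_card_of_injOn Prod.fst
    · intro p hp
      simp only [hS, Finset.mem_coe, Finset.mem_filter] at hp
      obtain ⟨_, hw, heq⟩ := hp
      rw [Finset.mem_coe, Finset.mem_filter]
      exact ⟨Finset.mem_univ _, heq ▸ hw⟩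
    · intro p hp q hq hpq
      simp only [hS, Finset.coe_filter, Set.mem_setOf_eq] at hp hq
      apply Prod.ext hpq
      rw [hp.2.2, hq.2.2, hpq]
  calc tensorCycDes w = A.card + B.card := hval
    _ = (A ∪ B).card := (Finset.card_union_of_disjoint hdisj).symm
    _ ≤ (univ.biUnion S).card := Finset.card_le_card hsub
    _ ≤ ∑ i, (S i).card := Finset.card_biUnion_le
    _ ≤ ∑ i, (univ.filter fun x : ∀ ℓ, Fin (m ℓ) =>
          w (Function.update x i (x i + 1)) < w x).card := Finset.sum_le_sum fun i _ => hScard i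
    _ ≤ _ := Finset.sum_le_sum fun i _ => dir_bound hk w i
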